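/- Let K be a field, let q, z, y ∈ K with z and y nonzero, and assume 1 − q^{4j} ≠ 0 for all 1 ≤ j ≤ N. Then Σ_μ z^{O(μ)} y^{O(μ')} q^{|μ|}, the finite sum over all strict partitions μ whose parts are all ≤ 2N, equals Σ_{j=0}^{N} [N choose j]_{q⁴} · (−zyq; q⁴)_j · (−zy^{−1}q; q⁴)_{N−j} · (yq)^{2N−2j}. -/

import Mathlib

open scoped BigOperators

/-- A partition: a weakly decreasing sequence of nonnegative integers (0-indexed:
`parts i` is λ_{i+1}) with finitely many nonzero terms. -/
structure IntPartition where
  parts : ℕ → ℕ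
  antitone : Antitone parts
  fin_support : ∃ N, ∀ n, N ≤ n → parts n = 0

namespace IntPartition

/-- Σ_{i≥1} ⌈λ_{2i-1}/2⌉ (odd-indexed rows, 1-based; ceiling). -/
noncomputable def statA (l : IntPartition) : ℕ := ∑ᶠ i : ℕ, (l.parts (2 * i) + 1) / 2
/-- Σ_{i≥1} ⌊λ_{2i-1}/2⌋. -/
noncomputable def statB (l : IntPartition) : ℕ := ∑ᶠ i : ℕ, l.parts (2 * i) / 2
/-- Σ_{i≥1} ⌈λ_{2i}/2⌉. -/
noncomputable def statC (l : IntPartition) : ℕ := ∑ᶠ i : ℕ, (l.parts (2 * i + 1) + 1) / 2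
/-- Σ_{i≥1} ⌊λ_{2i}/2⌋. -/
noncomputable def statD (l : IntPartition) : ℕ := ∑ᶠ i : ℕ, l.parts (2 * i + 1) / 2

/-- ℓ(λ): the number of nonzero parts. -/
noncomputable def length (l : IntPartition) : ℕ := Set.ncard (Function.support l.parts)

/-- |λ|: the sum of all parts. -/
noncomputable def size (l : IntPartition) : ℕ := ∑ᶠ i : ℕ, l.parts i

/-- A partition is strict if its nonzero parts are pairwise distinct. -/
def Strict (l : IntPartition) : Prop := ∀ i, l.parts (i + 1) ≠ 0 → l.parts (i + 1) < l.parts i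

/-- The Andrews–Stanley four-parameter weight ω(λ). -/
noncomputable def weight {R : Type*} [CommRing R] (a b c d : R) (l : IntPartition) : R :=
  a ^ l.statA * b ^ l.statB * c ^ l.statC * d ^ l.statD

/-- O(λ): the number of odd parts. -/
noncomputable def oddParts (l : IntPartition) : ℕ := Set.ncard {i : ℕ | Odd (l.parts i)}

/-- O(λ'): the number of odd parts of the conjugate partition. -/
noncomputable def conjOddParts (l : IntPartition) : ℕ :=
  Set.ncard {j : ℕ | Odd (Set.ncard {i : ℕ | j + 1 ≤ l.parts i})}

end IntPartition


namespace IntPartition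

lemma ext' {μ ν : IntPartition} (h : μ.parts = ν.parts) : μ = ν := by
  cases μ; cases ν; simpa using h

lemma parts_le_head (μ : IntPartition) (i : ℕ) : μ.parts i ≤ μ.parts 0 :=
  μ.antitone (Nat.zero_le i)

lemma parts_eq_zero_of_strict {μ : IntPartition} (hs : μ.Strict) {M : ℕ}
    (h0 : μ.parts 0 ≤ M) : ∀ i, M ≤ i → μ.parts i = 0 := by
  have key : ∀ i, μ.parts i = 0 ∨ μ.parts i + i ≤ M := by
    intro i
    induction i with
    | zero => right; simpa using h0
    | succ n ih =>
      by_cases hn : μ.parts (n + 1) = 0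
      · left; exact hn
      · right
        have hlt := hs n hn
        rcases ih with h1 | h1 <;> omega
  intro i hi
  rcases key i with h1 | h1
  · exact h1
  · omega

lemma ncard_eq_card_filter {p : ℕ → Prop} [DecidablePred p] {n : ℕ} (h : ∀ i, p i → i < n) :
    Set.ncard {i | p i} = ∑ i ∈ Finset.range n, if p i then 1 else 0 := by
  classical
  have hset : {i | p i} = ↑((Finset.range n).filter p) := by
    ext i
    simp only [Set.mem_setOf_eq, Finset.coe_filter, Finset.mem_range]
    exact ⟨fun hp => ⟨h i hp, hp⟩, fun hp => hp.2⟩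
  rw [hset, Set.ncard_coe_finset, Finset.card_filter]

variable {μ : IntPartition} {n M : ℕ}

lemma size_eq (hs : μ.Strict) (h0 : μ.parts 0 ≤ n) :
    μ.size = ∑ i ∈ Finset.range n, μ.parts i := by
  apply finsum_eq_sum_of_support_subset
  intro i hi
  simp only [Function.mem_support] at hi
  simp only [Finset.coe_range, Set.mem_Iio]
  by_contra hc
  exact hi (parts_eq_zero_of_strict hs h0 i (by omega))

lemma oddParts_eq (hs : μ.Strict) (h0 : μ.parts 0 ≤ n) :
    μ.oddParts = ∑ i ∈ Finset.range n, if Odd (μ.parts i) then 1 else 0 := by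
  apply ncard_eq_card_filter
  intro i hi
  by_contra hc
  rw [parts_eq_zero_of_strict hs h0 i (by omega)] at hi
  simp at hi

lemma colcount_eq (hs : μ.Strict) (h0 : μ.parts 0 ≤ n) (j : ℕ) :
    Set.ncard {i | j + 1 ≤ μ.parts i}
      = ∑ i ∈ Finset.range n, if j + 1 ≤ μ.parts i then 1 else 0 := by
  apply ncard_eq_card_filter
  intro i hi
  by_contra hc
  rw [parts_eq_zero_of_strict hs h0 i (by omega)] at hi
  omega

lemma conjOddParts_eq (hs : μ.Strict) (h0 : μ.parts 0 ≤ n) :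
    μ.conjOddParts = ∑ j ∈ Finset.range n,
      if Odd (Set.ncard {i | j + 1 ≤ μ.parts i}) then 1 else 0 := by
  apply ncard_eq_card_filter
  intro j hj
  by_contra hc
  have hempty : {i | j + 1 ≤ μ.parts i} = ∅ := by
    ext i
    simp only [Set.mem_setOf_eq, Set.mem_empty_iff_false, iff_false]
    have := μ.parts_le_head i
    omega
  rw [hempty] at hj
  simp at hj

/-- Prepend a part `M+1` to a partition (intended for partitions with parts ≤ M). -/
def prep (M : ℕ) (μ : IntPartition) : IntPartition where
  parts := fun i => match i with
    | 0 => max (M + 1) (μ.parts 0)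
    | (i + 1) => μ.parts i
  antitone := by
    apply antitone_nat_of_succ_le
    intro i
    match i with
    | 0 => exact le_max_right _ _
    | (i + 1) => exact μ.antitone (Nat.le_succ i)
  fin_support := by
    obtain ⟨n, hn⟩ := μ.fin_support
    refine ⟨n + 1, fun m hm => ?_⟩
    match m, hm with
    | (k + 1), hm => exact hn k (by omega)

/-- Remove the first part. -/
def tl (μ : IntPartition) : IntPartition where
  parts := fun i => μ.parts (i + 1)
  antitone := fun a b hab => μ.antitone (by omega)
  fin_support := by
    obtain ⟨n, hn⟩ := μ.fin_support
    exact ⟨n, fun m hm => hn _ (by omega)⟩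

lemma prep_parts_zero (h0 : μ.parts 0 ≤ M) : (prep M μ).parts 0 = M + 1 := by
  simp only [prep]
  omega

lemma prep_parts_succ (i : ℕ) : (prep M μ).parts (i + 1) = μ.parts i := rfl

lemma prep_strict (hs : μ.Strict) (h0 : μ.parts 0 ≤ M) : (prep M μ).Strict := by
  intro i hi
  match i with
  | 0 =>
    rw [prep_parts_succ] at hi ⊢
    rw [prep_parts_zero h0]
    omega
  | (i + 1) =>
    rw [prep_parts_succ] at hi ⊢
    rw [prep_parts_succ]
    exact hs i hi

lemma tl_strict (hs : μ.Strict) : (tl μ).Strict := fun i hi => hs (i + 1) hi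

lemma tl_parts_zero_le (hs : μ.Strict) (h1 : μ.parts 0 = M + 1) : (tl μ).parts 0 ≤ M := by
  show μ.parts (0 + 1) ≤ M
  by_cases h : μ.parts (0 + 1) = 0
  · omega
  · have := hs 0 h; omega

lemma prep_tl (h1 : μ.parts 0 = M + 1) : prep M (tl μ) = μ := by
  apply ext'
  funext i
  match i with
  | 0 =>
    show max (M + 1) (μ.parts (0 + 1)) = μ.parts 0
    have := μ.antitone (Nat.zero_le (0 + 1))
    omega
  | (i + 1) => rfl

lemma prep_size (hs : μ.Strict) (h0 : μ.parts 0 ≤ M) :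
    (prep M μ).size = (M + 1) + μ.size := by
  rw [size_eq (prep_strict hs h0) (le_of_eq (prep_parts_zero h0)),
    size_eq hs h0, Finset.sum_range_succ']
  simp only [prep_parts_succ, prep_parts_zero h0]
  omega

lemma prep_oddParts (hs : μ.Strict) (h0 : μ.parts 0 ≤ M) :
    (prep M μ).oddParts = (if Odd (M + 1) then 1 else 0) + μ.oddParts := by
  classical
  rw [oddParts_eq (prep_strict hs h0) (le_of_eq (prep_parts_zero h0)),
    oddParts_eq hs h0, Finset.sum_range_succ']
  simp only [prep_parts_succ, prep_parts_zero h0]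
  exact Nat.add_comm _ _

lemma prep_colcount (hs : μ.Strict) (h0 : μ.parts 0 ≤ M) {j : ℕ} (hj : j ≤ M) :
    Set.ncard {i | j + 1 ≤ (prep M μ).parts i} = 1 + Set.ncard {i | j + 1 ≤ μ.parts i} := by
  classical
  rw [colcount_eq (prep_strict hs h0) (le_of_eq (prep_parts_zero h0)),
    colcount_eq hs h0, Finset.sum_range_succ']
  simp only [prep_parts_succ, prep_parts_zero h0]
  rw [if_pos (by omega : j + 1 ≤ M + 1)]
  exact Nat.add_comm _ _

lemma conjOddParts_le (hs : μ.Strict) (h0 : μ.parts 0 ≤ M) : μ.conjOddParts ≤ M := by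
  classical
  rw [conjOddParts_eq hs h0]
  calc ∑ j ∈ Finset.range M, (if Odd (Set.ncard {i | j + 1 ≤ μ.parts i}) then 1 else 0)
      ≤ ∑ _j ∈ Finset.range M, 1 := Finset.sum_le_sum (fun j _ => by split <;> omega)
    _ = M := by simp

lemma prep_conjOddParts (hs : μ.Strict) (h0 : μ.parts 0 ≤ M) :
    (prep M μ).conjOddParts = (M + 1) - μ.conjOddParts := by
  classical
  rw [conjOddParts_eq (prep_strict hs h0) (le_of_eq (prep_parts_zero h0)),
    conjOddParts_eq hs (show μ.parts 0 ≤ M + 1 by omega)]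
  have key : ∀ j ∈ Finset.range (M + 1),
      (if Odd (Set.ncard {i | j + 1 ≤ (prep M μ).parts i}) then 1 else 0)
      = 1 - (if Odd (Set.ncard {i | j + 1 ≤ μ.parts i}) then 1 else 0) := by
    intro j hj
    rw [Finset.mem_range] at hj
    rw [prep_colcount hs h0 (by omega),
      Nat.add_comm 1 (Set.ncard {i | j + 1 ≤ μ.parts i})]
    rcases Nat.even_or_odd (Set.ncard {i | j + 1 ≤ μ.parts i}) with he | ho
    · rw [if_pos (Nat.odd_add_one.mpr (Nat.not_odd_iff_even.mpr he)), if_neg (Nat.not_odd_iff_even.mpr he)]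
    · rw [if_neg (by rw [Nat.odd_add_one, not_not]; exact ho), if_pos ho]
  rw [Finset.sum_congr rfl key]
  have hsum : ∑ j ∈ Finset.range (M + 1),
      (1 - (if Odd (Set.ncard {i | j + 1 ≤ μ.parts i}) then 1 else 0))
      + ∑ j ∈ Finset.range (M + 1),
      (if Odd (Set.ncard {i | j + 1 ≤ μ.parts i}) then 1 else 0) = M + 1 := by
    rw [← Finset.sum_add_distrib]
    have : ∀ j ∈ Finset.range (M + 1),
        (1 - (if Odd (Set.ncard {i | j + 1 ≤ μ.parts i}) then 1 else 0))
        + (if Odd (Set.ncard {i | j + 1 ≤ μ.parts i}) then 1 else 0) = 1 := by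
      intro j _
      split <;> omega
    rw [Finset.sum_congr rfl this]
    simp
  omega

end IntPartition

/-- The q-shifted factorial (x;q)_n. -/
def poch {R : Type*} [CommRing R] (x q : R) (n : ℕ) : R :=
  ∏ k ∈ Finset.range n, (1 - x * q ^ k)

/-- The infinite q-shifted factorial (x;q)_∞ (as an infinite product of reals). -/
noncomputable def pochInf (x q : ℝ) : ℝ := ∏' k : ℕ, (1 - x * q ^ k)

/-- The basic hypergeometric series ₂φ₁(α,β;γ;q,w). -/
noncomputable def phi21 (α β γ q w : ℝ) : ℝ :=
  ∑' n : ℕ, poch α q n * poch β q n / (poch q q n * poch γ q n) * w ^ n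

/-- Absolute convergence of the ₂φ₁ series. -/
def phi21Summable (α β γ q w : ℝ) : Prop :=
  Summable (fun n : ℕ => poch α q n * poch β q n / (poch q q n * poch γ q n) * w ^ n)

/-- The Gaussian binomial coefficient [N choose k]_q. -/
noncomputable def gauss {K : Type*} [Field K] (q : K) (N k : ℕ) : K :=
  poch q q N / (poch q q k * poch q q (N - k))

/-- Ψ_N(a,b,c,d;z): the generating function of strict partitions with parts ≤ N. -/
noncomputable def Psi {R : Type*} [CommRing R] (a b c d z : R) (N : ℕ) : R :=
  ∑ᶠ μ : {μ : IntPartition // μ.Strict ∧ μ.parts 0 ≤ N},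
    IntPartition.weight a b c d μ.1 * z ^ μ.1.length


section StepRec

variable {K : Type*} [Field K]

/-- The generating function of strict partitions with parts at most `M`. -/
noncomputable def LF (z y q : K) (M : ℕ) : K :=
  ∑ᶠ μ : {μ : IntPartition // μ.Strict ∧ μ.parts 0 ≤ M},
    z ^ μ.1.oddParts * y ^ μ.1.conjOddParts * q ^ μ.1.size

lemma strictSet_finite (M : ℕ) :
    {μ : IntPartition | μ.Strict ∧ μ.parts 0 ≤ M}.Finite := by
  have : Finite ({μ : IntPartition | μ.Strict ∧ μ.parts 0 ≤ M} : Set IntPartition) := by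
    apply Finite.of_injective
      (fun μ : {μ : IntPartition | μ.Strict ∧ μ.parts 0 ≤ M} =>
        (fun i : Fin M => (⟨μ.1.parts i, by
          have h1 := μ.1.parts_le_head i
          have h2 := μ.2.2
          omega⟩ : Fin (M + 1))))
    intro μ ν hf
    apply Subtype.ext
    apply IntPartition.ext'
    funext i
    by_cases hi : i < M
    · have := congrFun hf ⟨i, hi⟩
      simpa using this
    · rw [IntPartition.parts_eq_zero_of_strict μ.2.1 μ.2.2 i (by omega),
        IntPartition.parts_eq_zero_of_strict ν.2.1 ν.2.2 i (by omega)]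
  exact Set.toFinite _

lemma LF_zero (z y q : K) : LF z y q 0 = 1 := by
  have hzero : ∀ μ : {μ : IntPartition // μ.Strict ∧ μ.parts 0 ≤ 0},
      μ.1.oddParts = 0 ∧ μ.1.conjOddParts = 0 ∧ μ.1.size = 0 := by
    intro μ
    have hp : ∀ i, μ.1.parts i = 0 := fun i => by
      have := μ.1.parts_le_head i
      have := μ.2.2
      omega
    refine ⟨?_, ?_, ?_⟩
    · rw [IntPartition.oddParts_eq μ.2.1 μ.2.2]
      simp
    · rw [IntPartition.conjOddParts_eq μ.2.1 μ.2.2]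
      simp
    · rw [IntPartition.size_eq μ.2.1 μ.2.2]
      simp
  have hne : Nonempty {μ : IntPartition // μ.Strict ∧ μ.parts 0 ≤ 0} := by
    refine ⟨⟨⟨fun _ => 0, antitone_const, ⟨0, fun _ _ => rfl⟩⟩, ?_, le_refl 0⟩⟩
    intro i hi
    exact absurd rfl hi
  have hsub : Subsingleton {μ : IntPartition // μ.Strict ∧ μ.parts 0 ≤ 0} := by
    constructor
    intro μ ν
    apply Subtype.ext
    apply IntPartition.ext'
    funext i
    have h1 := μ.1.parts_le_head i
    have h2 := ν.1.parts_le_head i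
    have h3 := μ.2.2
    have h4 := ν.2.2
    omega
  haveI : Unique {μ : IntPartition // μ.Strict ∧ μ.parts 0 ≤ 0} :=
    @Unique.mk' _ (Classical.inhabited_of_nonempty hne) hsub
  rw [LF, finsum_unique]
  rw [(hzero _).1, (hzero _).2.1, (hzero _).2.2]
  simp

lemma LF_step (z y q : K) (hy : y ≠ 0) (M : ℕ) :
    LF z y q (M + 1) = LF z y q M
      + (z ^ (if Odd (M + 1) then 1 else 0) * y ^ (M + 1) * q ^ (M + 1)) * LF z y⁻¹ q M := by
  classical
  set f : IntPartition → K :=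
    fun μ => z ^ μ.oddParts * y ^ μ.conjOddParts * q ^ μ.size with hf
  set B : Set IntPartition := {μ | μ.Strict ∧ μ.parts 0 ≤ M} with hB
  have hBfin : B.Finite := strictSet_finite M
  set c : K := z ^ (if Odd (M + 1) then 1 else 0) * y ^ (M + 1) * q ^ (M + 1) with hc
  set g : IntPartition → K :=
    fun μ => z ^ μ.oddParts * (y⁻¹) ^ μ.conjOddParts * q ^ μ.size with hg
  have hweight : ∀ μ ∈ B, f (IntPartition.prep M μ) = c * g μ := by
    rintro μ ⟨hs, h0⟩
    rw [hf, hg, hc]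
    simp only
    rw [IntPartition.prep_oddParts hs h0, IntPartition.prep_conjOddParts hs h0,
      IntPartition.prep_size hs h0]
    have hcle := IntPartition.conjOddParts_le hs h0
    rw [pow_add z, pow_add q, pow_sub₀ y hy (by omega), inv_pow]
    ring
  have hset : {μ : IntPartition | μ.Strict ∧ μ.parts 0 ≤ M + 1}
      = B ∪ (IntPartition.prep M '' B) := by
    ext μ
    constructor
    · rintro ⟨hs, h1⟩
      by_cases h0 : μ.parts 0 ≤ M
      · exact Or.inl ⟨hs, h0⟩
      · right
        have hM1 : μ.parts 0 = M + 1 := by omega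
        exact ⟨IntPartition.tl μ,
          ⟨IntPartition.tl_strict hs, IntPartition.tl_parts_zero_le hs hM1⟩,
          IntPartition.prep_tl hM1⟩
    · rintro (⟨hs, h0⟩ | ⟨ν, ⟨hsν, h0ν⟩, rfl⟩)
      · exact ⟨hs, by omega⟩
      · exact ⟨IntPartition.prep_strict hsν h0ν,
          le_of_eq (IntPartition.prep_parts_zero h0ν)⟩
  have hdisj : Disjoint B (IntPartition.prep M '' B) := by
    rw [Set.disjoint_left]
    rintro μ ⟨hs, h0⟩ ⟨ν, ⟨hsν, h0ν⟩, rfl⟩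
    rw [IntPartition.prep_parts_zero h0ν] at h0
    omega
  have hinj : Set.InjOn (IntPartition.prep M) B := by
    rintro μ _ ν _ hμν
    apply IntPartition.ext'
    funext i
    have := congrArg (fun ρ : IntPartition => ρ.parts (i + 1)) hμν
    simpa [IntPartition.prep_parts_succ] using this
  have lhs_eq : LF z y q (M + 1)
      = ∑ᶠ μ ∈ {μ : IntPartition | μ.Strict ∧ μ.parts 0 ≤ M + 1}, f μ := by
    rw [LF]
    exact finsum_set_coe_eq_finsum_mem (f := f) _
  have mid_eq : LF z y q M = ∑ᶠ μ ∈ B, f μ := by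
    rw [LF]
    exact finsum_set_coe_eq_finsum_mem (f := f) _
  have inv_eq : LF z y⁻¹ q M = ∑ᶠ μ ∈ B, g μ := by
    rw [LF]
    exact finsum_set_coe_eq_finsum_mem (f := g) _
  have pull : ∑ᶠ μ ∈ B, (c * g μ) = c * ∑ᶠ μ ∈ B, g μ := by
    rw [finsum_mem_eq_finite_toFinset_sum _ hBfin,
      finsum_mem_eq_finite_toFinset_sum _ hBfin, Finset.mul_sum]
  rw [lhs_eq, hset, finsum_mem_union hdisj hBfin (hBfin.image _),
    finsum_mem_image hinj, finsum_mem_congr rfl hweight, pull,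
    mid_eq, inv_eq, hc]


end StepRec

section
variable {K : Type*} [Field K]

lemma poch_succ (x q : K) (n : ℕ) : poch x q (n + 1) = poch x q n * (1 - x * q ^ n) :=
  Finset.prod_range_succ _ _

lemma poch_zero (x q : K) : poch x q 0 = 1 := Finset.prod_range_zero _

lemma poch_ne_zero {q : K} {N : ℕ} (h : ∀ j, 1 ≤ j → j ≤ N → (1 : K) - q ^ (4 * j) ≠ 0)
    {n : ℕ} (hn : n ≤ N) : poch (q ^ 4) (q ^ 4) n ≠ 0 := by
  rw [poch, Finset.prod_ne_zero_iff]
  intro k hk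
  rw [Finset.mem_range] at hk
  have e : (q ^ 4) * (q ^ 4) ^ k = q ^ (4 * (k + 1)) := by
    rw [← pow_succ', pow_mul]
  rw [e]
  exact h (k + 1) (by omega) (by omega)

lemma gauss_zero' {q : K} {N : ℕ} (hN : poch q q N ≠ 0) : gauss q N 0 = 1 := by
  rw [gauss, poch_zero, one_mul, Nat.sub_zero, div_self hN]

lemma gauss_self' {q : K} {N : ℕ} (hN : poch q q N ≠ 0) : gauss q N N = 1 := by
  rw [gauss, Nat.sub_self, poch_zero, mul_one, div_self hN]

lemma gauss_symm {q : K} {N j : ℕ} (hj : j ≤ N) : gauss q N (N - j) = gauss q N j := by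
  rw [gauss, gauss, show N - (N - j) = j by omega, mul_comm]

lemma gauss_pascal {q : K} (i m : ℕ)
    (hPi : poch q q i ≠ 0) (hPm : poch q q m ≠ 0)
    (h1 : (1 : K) - q * q ^ i ≠ 0) (h2 : (1 : K) - q * q ^ m ≠ 0) :
    gauss q (i + m + 2) (i + 1)
      = gauss q (i + m + 1) i + q ^ (i + 1) * gauss q (i + m + 1) (i + 1) := by
  rw [gauss, gauss, gauss, show i + m + 2 - (i + 1) = m + 1 by omega,
    show i + m + 1 - i = m + 1 by omega, show i + m + 1 - (i + 1) = m by omega,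
    show i + m + 2 = (i + m + 1) + 1 from rfl, poch_succ q q (i + m + 1),
    poch_succ q q i, poch_succ q q m]
  field_simp
  ring
end

section
variable {K : Type*} [Field K]

lemma rhs_rec (z y q : K) (hy : y ≠ 0) (N : ℕ)
    (h : ∀ j, 1 ≤ j → j ≤ N + 1 → (1 : K) - q ^ (4 * j) ≠ 0) :
    (∑ j ∈ Finset.range (N + 2),
        gauss (q ^ 4) (N + 1) j * poch (-(z * y * q)) (q ^ 4) j *
          poch (-(z * y⁻¹ * q)) (q ^ 4) (N + 1 - j) * (y * q) ^ (2 * (N + 1) - 2 * j))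
      = (1 + z * y * q ^ (4 * N + 3)) *
          (∑ j ∈ Finset.range (N + 1),
            gauss (q ^ 4) N j * poch (-(z * y * q)) (q ^ 4) j *
              poch (-(z * y⁻¹ * q)) (q ^ 4) (N - j) * (y * q) ^ (2 * N - 2 * j))
        + (z * y ^ (2 * N + 1) * q ^ (2 * N + 1) + y ^ (2 * N + 2) * q ^ (2 * N + 2)) *
          (∑ j ∈ Finset.range (N + 1),
            gauss (q ^ 4) N j * poch (-(z * y⁻¹ * q)) (q ^ 4) j *
              poch (-(z * y * q)) (q ^ 4) (N - j) * (y⁻¹ * q) ^ (2 * N - 2 * j)) := by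
  classical
  set Q : K := q ^ 4 with hQ
  set A : ℕ → K := fun j => poch (-(z * y * q)) Q j with hA
  set Bp : ℕ → K := fun j => poch (-(z * y⁻¹ * q)) Q j with hBp
  set W1 : ℕ → K := fun j =>
    Q ^ j * gauss Q N j * A j * Bp (N + 1 - j) * (y * q) ^ (2 * (N + 1) - 2 * j) with hW1
  set W2 : ℕ → K := fun j =>
    gauss Q N j * A (j + 1) * Bp (N - j) * (y * q) ^ (2 * (N - j)) with hW2
  have hPle : ∀ n, n ≤ N + 1 → poch Q Q n ≠ 0 := fun n hn => by
    rw [hQ]; exact poch_ne_zero h hn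
  -- reflect the last sum
  have reflect : (∑ j ∈ Finset.range (N + 1),
        gauss Q N j * Bp j * A (N - j) * (y⁻¹ * q) ^ (2 * N - 2 * j))
      = ∑ j ∈ Finset.range (N + 1), gauss Q N j * A j * Bp (N - j) * (y⁻¹ * q) ^ (2 * j) := by
    rw [← Finset.sum_range_reflect
      (fun j => gauss Q N j * A j * Bp (N - j) * (y⁻¹ * q) ^ (2 * j)) (N + 1)]
    refine Finset.sum_congr rfl fun j hj => ?_
    rw [Finset.mem_range] at hj
    rw [show N + 1 - 1 - j = N - j by omega, gauss_symm (show j ≤ N by omega),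
      show N - (N - j) = j by omega, show 2 * N - 2 * j = 2 * (N - j) by omega]
    ring
  rw [reflect]
  have hT0 : gauss Q (N + 1) 0 * A 0 * Bp (N + 1 - 0) * (y * q) ^ (2 * (N + 1) - 2 * 0)
      = W1 0 := by
    rw [hW1]
    simp only [pow_zero, one_mul, Nat.sub_zero]
    rw [gauss_zero' (hPle (N + 1) (le_refl _)), gauss_zero' (hPle N (by omega))]
  have hTsucc : ∀ j ∈ Finset.range (N + 1),
      gauss Q (N + 1) (j + 1) * A (j + 1) * Bp (N + 1 - (j + 1))
          * (y * q) ^ (2 * (N + 1) - 2 * (j + 1))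
        = W2 j + (if j < N then W1 (j + 1) else 0) := by
    intro j hj
    rw [Finset.mem_range] at hj
    by_cases hjN : j < N
    · rw [if_pos hjN]
      have hp := gauss_pascal (q := Q) j (N - 1 - j) (hPle j (by omega))
        (hPle (N - 1 - j) (by omega))
        (by intro hzero
            apply hPle (j + 1) (by omega)
            rw [poch_succ, hzero, mul_zero])
        (by intro hzero
            apply hPle (N - j) (by omega)
            rw [show N - j = (N - 1 - j) + 1 by omega, poch_succ, hzero, mul_zero])
      rw [show j + (N - 1 - j) + 2 = N + 1 by omega,
        show j + (N - 1 - j) + 1 = N by omega] at hp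
      rw [hp, hW1, hW2]
      simp only
      rw [show N + 1 - (j + 1) = N - j by omega,
        show 2 * (N + 1) - 2 * (j + 1) = 2 * (N - j) by omega]
      ring
    · rw [if_neg hjN]
      have hjN' : j = N := by omega
      subst hjN'
      rw [hW2]
      simp only [Nat.sub_self]
      rw [gauss_self' (hPle (j + 1) (le_refl _)), gauss_self' (hPle j (by omega))]
      simp
  rw [Finset.sum_range_succ']
  rw [Finset.sum_congr rfl hTsucc, hT0, Finset.sum_add_distrib]
  have hite : (∑ j ∈ Finset.range (N + 1), (if j < N then W1 (j + 1) else 0))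
      = ∑ j ∈ Finset.range N, W1 (j + 1) := by
    rw [Finset.sum_range_succ, if_neg (lt_irrefl N), add_zero]
    exact Finset.sum_congr rfl fun j hj => if_pos (Finset.mem_range.mp hj)
  rw [hite, Finset.mul_sum, Finset.mul_sum, ← Finset.sum_add_distrib,
    add_assoc, ← Finset.sum_range_succ' W1 N, ← Finset.sum_add_distrib]
  refine Finset.sum_congr rfl fun j hj => ?_
  rw [Finset.mem_range] at hj
  obtain ⟨k, hk⟩ : ∃ k, N = j + k := ⟨N - j, by omega⟩
  subst hk
  rw [hW1, hW2]
  simp only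
  rw [show j + k + 1 - j = k + 1 by omega, show j + k - j = k by omega,
    show 2 * (j + k + 1) - 2 * j = 2 * k + 2 by omega,
    show 2 * (j + k) - 2 * j = 2 * k by omega]
  simp only [hA, hBp, hQ]
  rw [poch_succ (-(z * y * q)) (q ^ 4) j, poch_succ (-(z * y⁻¹ * q)) (q ^ 4) k]
  simp only [mul_pow, inv_pow]
  field_simp
  ring

end


theorem strict_andrews_even {K : Type*} [Field K] (q z y : K) (N : ℕ)
    (hz : z ≠ 0) (hy : y ≠ 0) (h : ∀ j, 1 ≤ j → j ≤ N → (1 : K) - q ^ (4 * j) ≠ 0) :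
    (∑ᶠ μ : {μ : IntPartition // μ.Strict ∧ μ.parts 0 ≤ 2 * N},
        z ^ μ.1.oddParts * y ^ μ.1.conjOddParts * q ^ μ.1.size) =
      ∑ j ∈ Finset.range (N + 1),
        gauss (q ^ 4) N j * poch (-(z * y * q)) (q ^ 4) j *
          poch (-(z * y⁻¹ * q)) (q ^ 4) (N - j) * (y * q) ^ (2 * N - 2 * j) := by
  have main : ∀ (N : ℕ) (y : K), y ≠ 0 →
      (∀ j, 1 ≤ j → j ≤ N → (1 : K) - q ^ (4 * j) ≠ 0) →
      LF z y q (2 * N) = ∑ j ∈ Finset.range (N + 1),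
        gauss (q ^ 4) N j * poch (-(z * y * q)) (q ^ 4) j *
          poch (-(z * y⁻¹ * q)) (q ^ 4) (N - j) * (y * q) ^ (2 * N - 2 * j) := by
    intro N
    induction N with
    | zero =>
      intro y hy _
      rw [Nat.mul_zero, LF_zero]
      simp [gauss, poch]
    | succ n ih =>
      intro y hy hh
      have hOddT : Odd (2 * n + 1) := ⟨n, by ring⟩
      have hOddF : ¬ Odd (2 * n + 1 + 1) := by rintro ⟨m, hm⟩; omega
      have e1 := ih y hy (fun j h1 h2 => hh j h1 (by omega))
      have e2 := ih y⁻¹ (inv_ne_zero hy) (fun j h1 h2 => hh j h1 (by omega))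
      rw [inv_inv y] at e2
      have s1 := LF_step z y q hy (2 * n)
      have s2 := LF_step z y⁻¹ q (inv_ne_zero hy) (2 * n)
      rw [inv_inv y] at s2
      have s3 := LF_step z y q hy (2 * n + 1)
      rw [if_pos hOddT, pow_one] at s1 s2
      rw [if_neg hOddF, pow_zero] at s3
      rw [show n + 1 + 1 = n + 2 by omega,
        rhs_rec z y q hy n (fun j h1 h2 => hh j h1 (by omega)),
        show 2 * (n + 1) = 2 * n + 1 + 1 by ring, s3, s1, s2, e1, e2]
      simp only [inv_pow]
      field_simp
      ring
  have := main N y hy h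
  rw [LF] at this
  exact this
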